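/- Comparison of χ and iSWAP gadgets (eq:iSWAP-U(4)): let T_iSWAP = M(5/9, 1/3), i.e. the symmetric 4×4 matrix with rows (1,0,0,0), (0, 0, 1/3, 2√3/9), (0, 1/3, 0, 2√3/9), (0, 2√3/9, 2√3/9, 5/9), and let T_χ = M(3/5, 1/5), i.e. the matrix with rows (1,0,0,0), (0, 1/5, 1/5, √3/5), (0, 1/5, 1/5, √3/5), (0, √3/5, √3/5, 3/5). Then both (I − T_χ) − (3/4)(I − T_iSWAP) and T_χ − T_iSWAP are positive semidefinite; i.e. (3/4)(I − T_iSWAP) ⪯ (I − T_χ) ⪯ (I − T_iSWAP) in the Loewner order. -/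

import Mathlib

open Matrix

/-- The matrix representation `M(a,c)` of the second moment operator of an ironed gadget. -/
noncomputable def gadgetMatrix (a c : ℝ) : Matrix (Fin 4) (Fin 4) ℝ :=
  !![1, 0, 0, 0;
     0, 1 - c - (3/2) * (1 - a), c, (Real.sqrt 3 / 2) * (1 - a);
     0, c, 1 - c - (3/2) * (1 - a), (Real.sqrt 3 / 2) * (1 - a);
     0, (Real.sqrt 3 / 2) * (1 - a), (Real.sqrt 3 / 2) * (1 - a), a]

/-- The second-moment matrix of the iSWAP gadget, `T_iSWAP = M(5/9, 1/3)`. -/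
noncomputable def TiSWAP : Matrix (Fin 4) (Fin 4) ℝ := gadgetMatrix (5/9) (1/3)

/-- The second-moment matrix of the χ gadget, `T_χ = M(3/5, 1/5)`. -/
noncomputable def Tchi : Matrix (Fin 4) (Fin 4) ℝ := gadgetMatrix (3/5) (1/5)

set_option maxHeartbeats 1000000 in
/-- **Comparison of the χ and iSWAP gadgets** (Eq. (eq:iSWAP-U(4))): both
`(I − T_χ) − (3/4)(I − T_iSWAP)` and `T_χ − T_iSWAP` are positive semidefinite, i.e.
`(3/4)(I − T_iSWAP) ⪯ (I − T_χ) ⪯ (I − T_iSWAP)` in the Loewner order. -/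
theorem chi_vs_iSWAP_loewner :
    ((1 - Tchi) - (3/4 : ℝ) • (1 - TiSWAP)).PosSemidef ∧
    (Tchi - TiSWAP).PosSemidef := by
  have h3 : Real.sqrt 3 * Real.sqrt 3 = 3 := Real.mul_self_sqrt (by norm_num)
  have hA : (1 - Tchi) - (3/4 : ℝ) • (1 - TiSWAP) =
      !![0, 0, 0, 0;
         0, 1/20, 1/20, -(Real.sqrt 3)/30;
         0, 1/20, 1/20, -(Real.sqrt 3)/30;
         0, -(Real.sqrt 3)/30, -(Real.sqrt 3)/30, 1/15] := by
    ext i j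
    fin_cases i <;> fin_cases j <;>
      simp [Tchi, TiSWAP, gadgetMatrix, Matrix.one_apply, Matrix.vecHead, Matrix.vecTail] <;>
      ring
  have hB : Tchi - TiSWAP =
      !![0, 0, 0, 0;
         0, 1/5, -2/15, -(Real.sqrt 3)/45;
         0, -2/15, 1/5, -(Real.sqrt 3)/45;
         0, -(Real.sqrt 3)/45, -(Real.sqrt 3)/45, 2/45] := by
    ext i j
    fin_cases i <;> fin_cases j <;>
      simp [Tchi, TiSWAP, gadgetMatrix, Matrix.vecHead, Matrix.vecTail] <;> ring
  rw [hA, hB]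
  constructor
  · refine Matrix.posSemidef_iff_dotProduct_mulVec.mpr ⟨?_, fun x => ?_⟩
    · ext i j
      fin_cases i <;> fin_cases j <;>
        simp [Matrix.conjTranspose_apply, Matrix.vecHead, Matrix.vecTail]
    · simp [dotProduct, Matrix.mulVec, Fin.sum_univ_four]
      nlinarith [sq_nonneg (Real.sqrt 3 * (x 1 + x 2) - 2 * x 3), sq_nonneg (x 1 - x 2),
        sq_nonneg (x 1 + x 2), sq_nonneg (x 3), h3]
  · refine Matrix.posSemidef_iff_dotProduct_mulVec.mpr ⟨?_, fun x => ?_⟩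
    · ext i j
      fin_cases i <;> fin_cases j <;>
        simp [Matrix.conjTranspose_apply, Matrix.vecHead, Matrix.vecTail]
    · simp [dotProduct, Matrix.mulVec, Fin.sum_univ_four]
      nlinarith [sq_nonneg (3 * (x 1 + x 2) - 2 * Real.sqrt 3 * x 3), sq_nonneg (x 1 - x 2),
        sq_nonneg (x 1 + x 2), sq_nonneg (x 3), h3]
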